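/- arXiv:1511.03261 — 2 statements merged into one kernel-verified Lean document; each statement's English description precedes it below -/
import Mathlib

section
/- Let m be a positive integer, λ ∈ ℝ, and D, B : Fin m → ℝ. Assume that for all indices i, j with D i ≠ D j one has B i * B j + λ * (B i + B j) = D i + D j. Then the range of D has at most 3 elements, i.e., the finite set (Finset.univ.image D) has cardinality at most 3. -/
/-- Algebraic core of Corollary 4.5: if the eigenvalues `D i` of the para-Blaschke
tensor and the conformal principal curvatures `B i` satisfy
`B i * B j + λ * (B i + B j) = D i + D j` whenever `D i ≠ D j`, then `D` takes at
most 3 distinct values. -/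
theorem paraBlaschke_distinct_eigenvalues_le_three
    (m : ℕ) (hm : 0 < m) (lam : ℝ) (D B : Fin m → ℝ)
    (h : ∀ i j, D i ≠ D j → B i * B j + lam * (B i + B j) = D i + D j) :
    (Finset.univ.image D).card ≤ 3 := by
  by_contra hc
  push_neg at hc
  obtain ⟨t, hts, htc⟩ := Finset.exists_subset_card_eq hc
  have ht0 : 0 < t.card := by omega
  obtain ⟨a, ha⟩ := Finset.card_pos.mp ht0
  have hte : (t.erase a).card = 3 := by
    rw [Finset.card_erase_of_mem ha, htc]
  obtain ⟨b, c, d, hbc, hbd, hcd, habc⟩ := Finset.card_eq_three.mp hte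
  have hab : a ≠ b := by
    intro hEq; have : b ∈ t.erase a := by rw [habc]; simp
    exact (Finset.ne_of_mem_erase this) hEq.symm
  have hac : a ≠ c := by
    intro hEq; have : c ∈ t.erase a := by rw [habc]; simp
    exact (Finset.ne_of_mem_erase this) hEq.symm
  have had : a ≠ d := by
    intro hEq; have : d ∈ t.erase a := by rw [habc]; simp
    exact (Finset.ne_of_mem_erase this) hEq.symm
  have hmem : ∀ x ∈ t, ∃ i, D i = x := by
    intro x hx
    have := hts hx
    simp only [Finset.mem_image, Finset.mem_univ, true_and] at this
    exact this
  have hbm : b ∈ t := Finset.mem_of_mem_erase (by rw [habc]; simp)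
  have hcm : c ∈ t := Finset.mem_of_mem_erase (by rw [habc]; simp)
  have hdm : d ∈ t := Finset.mem_of_mem_erase (by rw [habc]; simp)
  obtain ⟨i1, hi1⟩ := hmem a ha
  obtain ⟨i2, hi2⟩ := hmem b hbm
  obtain ⟨i3, hi3⟩ := hmem c hcm
  obtain ⟨i4, hi4⟩ := hmem d hdm
  have h12 : D i1 ≠ D i2 := by rw [hi1, hi2]; exact hab
  have h13 : D i1 ≠ D i3 := by rw [hi1, hi3]; exact hac
  have h14 : D i1 ≠ D i4 := by rw [hi1, hi4]; exact had
  have h23 : D i2 ≠ D i3 := by rw [hi2, hi3]; exact hbc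
  have h24 : D i2 ≠ D i4 := by rw [hi2, hi4]; exact hbd
  have h34 : D i3 ≠ D i4 := by rw [hi3, hi4]; exact hcd
  have e12 := h i1 i2 h12
  have e13 := h i1 i3 h13
  have e24 := h i2 i4 h24
  have e34 := h i3 i4 h34
  have e42 := h i4 i2 h24.symm
  have e32 := h i3 i2 h23.symm
  have key : (B i1 - B i4) * (B i2 - B i3) = 0 := by
    linear_combination e12 + e34 - e13 - e24
  rcases mul_eq_zero.mp key with hz | hz
  · have hB : B i1 = B i4 := by linarith [sub_eq_zero.mp hz]
    apply h14
    have : D i1 + D i2 = D i4 + D i2 := by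
      rw [← e12, ← e42, hB]
    linarith
  · have hB : B i2 = B i3 := by linarith [sub_eq_zero.mp hz]
    apply h23
    have : D i1 + D i2 = D i1 + D i3 := by
      rw [← e12, ← e13, hB]
    linarith
end

section
/- Let m be a positive integer, λ ∈ ℝ, and D, B : Fin m → ℝ. Assume that for all indices i, j with D i ≠ D j one has B i * B j + λ * (B i + B j) = D i + D j. If there exist indices i, j with D i = D j and B i ≠ B j, then for every index k with D k ≠ D i one has B k = −λ and D k = −λ² − D i; in particular the range of D is contained in {D i, −λ² − D i} and has at most 2 elements. -/
/-- Algebraic core of Lemma 4.4: if `B i * B j + λ * (B i + B j) = D i + D j`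
whenever `D i ≠ D j`, and there are indices `i, j` with `D i = D j` but
`B i ≠ B j`, then every `k` with `D k ≠ D i` satisfies `B k = -λ` and
`D k = -λ² - D i`; in particular the range of `D` is contained in
`{D i, -λ² - D i}` and has at most 2 elements. -/
theorem paraBlaschke_two_eigenvalues
    (m : ℕ) (hm : 0 < m) (lam : ℝ) (D B : Fin m → ℝ)
    (h : ∀ i j, D i ≠ D j → B i * B j + lam * (B i + B j) = D i + D j)
    (i j : Fin m) (hD : D i = D j) (hB : B i ≠ B j) :
    (∀ k, D k ≠ D i → B k = -lam ∧ D k = -lam ^ 2 - D i)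
      ∧ (∀ k, D k = D i ∨ D k = -lam ^ 2 - D i)
      ∧ (Finset.univ.image D).card ≤ 2 := by
  have key : ∀ k, D k ≠ D i → B k = -lam ∧ D k = -lam ^ 2 - D i := by
    intro k hk
    have h1 := h i k (fun e => hk e.symm)
    have h2 := h j k (fun e => hk (e.symm.trans hD.symm))
    rw [← hD] at h2
    have hBk : B k = -lam := by
      have hfac : (B i - B j) * (B k + lam) = 0 := by linarith
      rcases mul_eq_zero.mp hfac with h' | h'
      · exact absurd (by linarith) hB
      · linarith
    refine ⟨hBk, ?_⟩
    rw [hBk] at h1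
    nlinarith [h1]
  refine ⟨key, ?_, ?_⟩
  · intro k
    by_cases hk : D k = D i
    · exact Or.inl hk
    · exact Or.inr (key k hk).2
  · have hsub : Finset.univ.image D ⊆ {D i, -lam ^ 2 - D i} := by
      intro x hx
      simp only [Finset.mem_image] at hx
      obtain ⟨k, -, rfl⟩ := hx
      by_cases hk : D k = D i
      · simp [hk]
      · simp [(key k hk).2]
    calc (Finset.univ.image D).card ≤ ({D i, -lam ^ 2 - D i} : Finset ℝ).card :=
          Finset.card_le_card hsub
      _ ≤ 2 := Finset.card_insert_le _ _ |>.trans (by simp)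
end
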